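/- Every reflexive asymptotically uniformly smooth Banach space has the Banach-Saks property. -/

import Mathlib

open Filter Topology Metric Set Pointwise

noncomputable section

namespace CLG

variable {X Y : Type*}

/-- The expansion modulus `ω_f`. -/
def expansionMod [PseudoMetricSpace X] [PseudoMetricSpace Y] (f : X → Y) (t : ℝ) : ℝ :=
  sSup {r : ℝ | ∃ x y : X, dist x y ≤ t ∧ r = dist (f x) (f y)}

/-- The compression modulus `ρ_f`. -/
def compressionMod [PseudoMetricSpace X] [PseudoMetricSpace Y] (f : X → Y) (t : ℝ) : ℝ :=
  sInf {r : ℝ | ∃ x y : X, t ≤ dist x y ∧ r = dist (f x) (f y)}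

/-- `f` is a coarse map: `ω_f(t) < ∞` for every `t`. -/
def IsCoarseMap [PseudoMetricSpace X] [PseudoMetricSpace Y] (f : X → Y) : Prop :=
  ∀ t : ℝ, ∃ C : ℝ, ∀ x y : X, dist x y ≤ t → dist (f x) (f y) ≤ C

/-- `f` is a coarse embedding: a coarse map with `ρ_f(t) → ∞`. -/
def IsCoarseEmbedding [PseudoMetricSpace X] [PseudoMetricSpace Y] (f : X → Y) : Prop :=
  IsCoarseMap f ∧ ∀ M : ℝ, ∃ t : ℝ, ∀ x y : X, t ≤ dist x y → M ≤ dist (f x) (f y)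

/-- `f` is a uniform embedding: `ω_f(t) → 0` as `t → 0` and `ρ_f(t) > 0` for `t > 0`. -/
def IsUniformEmbeddingMap [PseudoMetricSpace X] [PseudoMetricSpace Y] (f : X → Y) : Prop :=
  (∀ ε > (0:ℝ), ∃ δ > (0:ℝ), ∀ x y : X, dist x y ≤ δ → dist (f x) (f y) ≤ ε) ∧
  (∀ t > (0:ℝ), ∃ r > (0:ℝ), ∀ x y : X, t ≤ dist x y → r ≤ dist (f x) (f y))

/-- `f` is a coarse Lipschitz embedding. -/
def IsCoarseLipschitzEmbedding [PseudoMetricSpace X] [PseudoMetricSpace Y] (f : X → Y) : Prop :=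
  ∃ L : ℝ, 0 < L ∧ ∀ x y : X,
    dist (f x) (f y) ≤ L * dist x y + L ∧ L⁻¹ * dist x y - L ≤ dist (f x) (f y)

def CoarseLipschitzEmbeds (X Y : Type*) [PseudoMetricSpace X] [PseudoMetricSpace Y] : Prop :=
  ∃ f : X → Y, IsCoarseLipschitzEmbedding f

/-- The set of exponents `α > 0` admitting a coarse embedding `f : X → Y` with
`ρ_f(t) ≥ L⁻¹ t^α − L`. -/
def compressionSet (X Y : Type*) [NormedAddCommGroup X] [NormedAddCommGroup Y] : Set ℝ :=
  {α : ℝ | 0 < α ∧ ∃ f : X → Y, IsCoarseMap f ∧ ∃ L : ℝ, 0 < L ∧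
    ∀ x y : X, L⁻¹ * ‖x - y‖ ^ α - L ≤ ‖f x - f y‖}

/-- The compression exponent `α_Y(X)` (note the argument order: `compressionExp X Y = α_Y(X)`).
By convention `sSup ∅ = 0`, matching `α_Y(X) = 0` when no such embedding exists. -/
def compressionExp (X Y : Type*) [NormedAddCommGroup X] [NormedAddCommGroup Y] : ℝ :=
  sSup (compressionSet X Y)

/-- The modulus of asymptotic uniform smoothness `ρ̄_X(t)`. -/
def ausModulus (X : Type*) [NormedAddCommGroup X] [NormedSpace ℝ X] (t : ℝ) : ℝ :=
  ⨆ x : {x : X // ‖x‖ = 1},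
    ⨅ E : {E : Submodule ℝ X // FiniteDimensional ℝ (X ⧸ E)},
      ⨆ h : {h : X // h ∈ E.1 ∧ ‖h‖ = 1}, (‖x.1 + t • h.1‖ - 1)

/-- The modulus of asymptotic uniform convexity `δ̄_X(t)`. -/
def aucModulus (X : Type*) [NormedAddCommGroup X] [NormedSpace ℝ X] (t : ℝ) : ℝ :=
  ⨅ x : {x : X // ‖x‖ = 1},
    ⨆ E : {E : Submodule ℝ X // FiniteDimensional ℝ (X ⧸ E)},
      ⨅ h : {h : X // h ∈ E.1 ∧ ‖h‖ = 1}, (‖x.1 + t • h.1‖ - 1)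

/-- Asymptotically uniformly smooth: `ρ̄_X(t)/t → 0` as `t → 0⁺`. -/
def AsympUniformlySmooth (X : Type*) [NormedAddCommGroup X] [NormedSpace ℝ X] : Prop :=
  Tendsto (fun t => ausModulus X t / t) (𝓝[>] (0:ℝ)) (𝓝 0)

/-- Asymptotically `p`-uniformly smooth: `ρ̄_X(t) ≤ C t^p` on `[0,1]`. -/
def AsympPUnifSmooth (X : Type*) [NormedAddCommGroup X] [NormedSpace ℝ X] (p : ℝ) : Prop :=
  ∃ C > (0:ℝ), ∀ t ∈ Set.Icc (0:ℝ) 1, ausModulus X t ≤ C * t ^ p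

/-- Asymptotically `p`-uniformly convex: `δ̄_X(t) ≥ C t^p` on `[0,1]`. -/
def AsympPUnifConvex (X : Type*) [NormedAddCommGroup X] [NormedSpace ℝ X] (p : ℝ) : Prop :=
  ∃ C > (0:ℝ), ∀ t ∈ Set.Icc (0:ℝ) 1, C * t ^ p ≤ aucModulus X t

/-- Reflexivity of a Banach space: the canonical embedding into the double dual is onto. -/
def BanachReflexive (X : Type*) [NormedAddCommGroup X] [NormedSpace ℝ X] : Prop :=
  Function.Surjective (NormedSpace.inclusionInDoubleDual ℝ X)

/-- A weakly null sequence. -/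
def WeaklyNull [NormedAddCommGroup X] [NormedSpace ℝ X] (x : ℕ → X) : Prop :=
  ∀ φ : X →L[ℝ] ℝ, Tendsto (fun n => φ (x n)) atTop (𝓝 0)

/-- A semi-normalized sequence. -/
def SemiNormalized [NormedAddCommGroup X] (x : ℕ → X) : Prop :=
  ∃ a b : ℝ, 0 < a ∧ ∀ n, a ≤ ‖x n‖ ∧ ‖x n‖ ≤ b

/-- The Banach-Saks property. -/
def BanachSaksProp (X : Type*) [NormedAddCommGroup X] [NormedSpace ℝ X] : Prop :=
  ∀ x : ℕ → X, (∃ b : ℝ, ∀ n, ‖x n‖ ≤ b) → ∃ φ : ℕ → ℕ, StrictMono φ ∧ ∃ L : X,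
    Tendsto (fun k : ℕ => (k:ℝ)⁻¹ • ∑ j ∈ Finset.range k, x (φ j)) atTop (𝓝 L)

/-- The alternating Banach-Saks property. -/
def AltBanachSaks (X : Type*) [NormedAddCommGroup X] [NormedSpace ℝ X] : Prop :=
  ∀ x : ℕ → X, (∃ b : ℝ, ∀ n, ‖x n‖ ≤ b) → ∃ φ : ℕ → ℕ, StrictMono φ ∧
    ∃ ε : ℕ → ℝ, (∀ j, ε j = 1 ∨ ε j = -1) ∧ ∃ L : X,
      Tendsto (fun k : ℕ => (k:ℝ)⁻¹ • ∑ j ∈ Finset.range k, ε j • x (φ j)) atTop (𝓝 L)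

/-- The `p`-Banach-Saks property. -/
def PBanachSaks (X : Type*) [NormedAddCommGroup X] [NormedSpace ℝ X] (p : ℝ) : Prop :=
  ∀ x : ℕ → X, SemiNormalized x → WeaklyNull x →
    ∃ φ : ℕ → ℕ, StrictMono φ ∧ ∃ c > (0:ℝ), ∀ (k : ℕ) (n : Fin k → ℕ),
      StrictMono n → (∀ i, k ≤ n i) → ‖∑ i, x (φ (n i))‖ ≤ c * (k : ℝ) ^ (1 / p)

/-- The `p`-co-Banach-Saks property. -/
def PCoBanachSaks (X : Type*) [NormedAddCommGroup X] [NormedSpace ℝ X] (p : ℝ) : Prop :=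
  ∀ x : ℕ → X, SemiNormalized x → WeaklyNull x →
    ∃ φ : ℕ → ℕ, StrictMono φ ∧ ∃ c > (0:ℝ), ∀ (k : ℕ) (n : Fin k → ℕ),
      StrictMono n → (∀ i, k ≤ n i) → c * (k : ℝ) ^ (1 / p) ≤ ‖∑ i, x (φ (n i))‖

/-- The almost `p`-co-Banach-Saks property. -/
def AlmostPCoBanachSaks (X : Type*) [NormedAddCommGroup X] [NormedSpace ℝ X] (p : ℝ) : Prop :=
  ∀ x : ℕ → X, SemiNormalized x → WeaklyNull x →
    ∃ φ : ℕ → ℕ, StrictMono φ ∧ ∃ θ : ℕ → ℝ, (∀ j, 1 ≤ θ j) ∧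
      (∀ α > (0:ℝ), Tendsto (fun j : ℕ => (j:ℝ) ^ α / θ j) atTop atTop) ∧
      ∀ (k : ℕ) (n : Fin k → ℕ), StrictMono n → (∀ i, k ≤ n i) →
        (k:ℝ) ^ (1 / p) / θ k ≤ ‖∑ i, x (φ (n i))‖

/-- `X` contains an isomorphic copy of `ℓ₁`, witnessed by a sequence equivalent to the
unit vector basis of `ℓ₁`. -/
def ContainsL1Copy (X : Type*) [NormedAddCommGroup X] [NormedSpace ℝ X] : Prop :=
  ∃ (x : ℕ → X) (c C : ℝ), 0 < c ∧ 0 < C ∧ ∀ (k : ℕ) (a : Fin k → ℝ),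
    c * (∑ i, |a i|) ≤ ‖∑ i, a i • x i.1‖ ∧ ‖∑ i, a i • x i.1‖ ≤ C * ∑ i, |a i|

/-- The set of approximate midpoints of `x` and `y` with error `δ`. -/
def Mid [PseudoMetricSpace X] (x y : X) (δ : ℝ) : Set X :=
  {z : X | max (dist x z) (dist y z) ≤ (1 + δ) / 2 * dist x y}

/-- `Lip_s(f) = sup_{t ≥ s} ω_f(t)/t`. -/
def lipAt [PseudoMetricSpace X] [PseudoMetricSpace Y] (f : X → Y) (s : ℝ) : ℝ :=
  ⨆ t : {t : ℝ // s ≤ t}, expansionMod f t.1 / t.1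

/-- `Lip_∞(f) = inf_{s > 0} Lip_s(f)`. -/
def lipInfty [PseudoMetricSpace X] [PseudoMetricSpace Y] (f : X → Y) : ℝ :=
  ⨅ s : {s : ℝ // 0 < s}, lipAt f s.1

end CLG

open CLG

namespace BSAux

open NormedSpace TopologicalSpace

variable {Z : Type*} [NormedAddCommGroup Z] [NormedSpace ℝ Z]

noncomputable def mkCLM (W : Submodule ℝ Z) : Z →L[ℝ] Z ⧸ W :=
  LinearMap.mkContinuous W.mkQ 1 fun x => by
    simpa using Submodule.Quotient.norm_mk_le W x

@[simp] lemma mkCLM_apply (W : Submodule ℝ Z) (z : Z) :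
    mkCLM W z = Submodule.Quotient.mk z := rfl

lemma exists_dual_annihilator (W : Submodule ℝ Z) (hW : IsClosed (W : Set Z)) {v : Z}
    (hv : v ∉ W) : ∃ g : Z →L[ℝ] ℝ, (∀ w ∈ W, g w = 0) ∧ g v ≠ 0 := by
  haveI : IsClosed (W : Set Z) := hW
  have hne : (Submodule.Quotient.mk v : Z ⧸ W) ≠ 0 := by
    simpa [Submodule.Quotient.mk_eq_zero] using hv
  obtain ⟨h, -, h2⟩ := exists_dual_vector ℝ _ (norm_ne_zero_iff.2 hne)
  refine ⟨h.comp (mkCLM W), fun w hw => ?_, ?_⟩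
  · have hw0 : (Submodule.Quotient.mk w : Z ⧸ W) = 0 := (Submodule.Quotient.mk_eq_zero W).2 hw
    simp [hw0]
  · simp only [ContinuousLinearMap.comp_apply, mkCLM_apply, h2]
    exact_mod_cast norm_ne_zero_iff.2 hne

/-- The restriction map from the dual of `Z` to the dual of a subspace. -/
noncomputable def restrictD (Y : Submodule ℝ Z) : StrongDual ℝ Z →L[ℝ] StrongDual ℝ Y :=
  (ContinuousLinearMap.compSL Y Z ℝ (RingHom.id ℝ) (RingHom.id ℝ)).flip Y.subtypeL

@[simp] lemma restrictD_apply (Y : Submodule ℝ Z) (f : StrongDual ℝ Z) (y : Y) :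
    restrictD Y f y = f y := rfl

/-- A closed subspace of a reflexive space is reflexive. -/
lemma reflexive_closed_subspace
    (hrefl : Function.Surjective (inclusionInDoubleDual ℝ Z)) (Y : Submodule ℝ Z)
    (hY : IsClosed (Y : Set Z)) :
    Function.Surjective (inclusionInDoubleDual ℝ Y) := by
  intro Λ
  obtain ⟨x, hx⟩ := hrefl (Λ.comp (restrictD Y))
  have hmem : x ∈ Y := by
    by_contra hxY
    obtain ⟨g, hg0, hgv⟩ := exists_dual_annihilator Y hY hxY
    have h1 : g x = Λ (restrictD Y g) := by
      have := congrArg (fun T => T g) hx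
      simpa using this
    have h2 : restrictD Y g = 0 := by
      ext y; exact hg0 y y.2
    rw [h2, map_zero] at h1
    exact hgv h1
  refine ⟨⟨x, hmem⟩, ?_⟩
  ext f
  obtain ⟨g, hg, -⟩ := exists_extension_norm_eq (𝕜 := ℝ) Y f
  have h1 : g x = Λ (restrictD Y g) := by
    have := congrArg (fun T => T g) hx
    simpa using this
  have h2 : restrictD Y g = f := by
    ext y; exact hg y
  calc inclusionInDoubleDual ℝ Y ⟨x, hmem⟩ f = f ⟨x, hmem⟩ := rfl
    _ = g x := (hg ⟨x, hmem⟩).symm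
    _ = Λ (restrictD Y g) := h1
    _ = Λ f := by rw [h2]

/-- A normed space with separable dual is separable. -/
lemma separable_of_dual_separable [SeparableSpace (StrongDual ℝ Z)] : SeparableSpace Z := by
  obtain ⟨D, Dcount, Ddense⟩ := exists_countable_dense (StrongDual ℝ Z)
  have hch : ∀ f : StrongDual ℝ Z, ∃ z : Z, ‖z‖ ≤ 1 ∧ ‖f‖ / 2 ≤ f z := by
    intro f
    rcases eq_or_lt_of_le (norm_nonneg f) with h0 | h0
    · exact ⟨0, by simp, by simp [← h0]⟩
    · obtain ⟨z, hz1, hz2⟩ := f.exists_lt_apply_of_lt_opNorm (half_lt_self h0)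
      rcases le_or_gt 0 (f z) with hfz | hfz
      · refine ⟨z, hz1.le, ?_⟩
        rw [Real.norm_eq_abs, abs_of_nonneg hfz] at hz2
        exact hz2.le
      · refine ⟨-z, by simpa using hz1.le, ?_⟩
        rw [Real.norm_eq_abs, abs_of_neg hfz] at hz2
        rw [map_neg]
        exact hz2.le
  choose zf hzf1 hzf2 using hch
  set W := (Submodule.span ℝ (zf '' D)).topologicalClosure with hWdef
  have hWtop : W = ⊤ := by
    by_contra hne
    obtain ⟨v, hv⟩ : ∃ v : Z, v ∉ W := by
      by_contra hc
      push_neg at hc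
      exact hne (Submodule.eq_top_iff'.2 hc)
    obtain ⟨g, hg0, hgv⟩ := exists_dual_annihilator W (by rw [hWdef]; exact Submodule.isClosed_topologicalClosure _) hv
    have hgpos : 0 < ‖g‖ := by
      rw [norm_pos_iff]
      intro h0
      exact hgv (by simp [h0])
    obtain ⟨f, hfD, hfg⟩ := Ddense.exists_dist_lt g (by positivity : 0 < ‖g‖ / 8)
    have hdist : ‖f - g‖ < ‖g‖ / 8 := by
      rwa [← dist_eq_norm, dist_comm]
    have hfnorm : 7 * ‖g‖ / 8 ≤ ‖f‖ := by
      have := norm_sub_norm_le f g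
      have h2 := norm_sub_norm_le g f
      rw [norm_sub_rev] at h2
      linarith
    have hzW : zf f ∈ W := by
      apply Submodule.le_topologicalClosure
      exact Submodule.subset_span ⟨f, hfD, rfl⟩
    have hg0' : g (zf f) = 0 := hg0 _ hzW
    have hsmall : f (zf f) ≤ ‖g‖ / 8 := by
      have : f (zf f) = (f - g) (zf f) := by simp [hg0']
      rw [this]
      calc (f - g) (zf f) ≤ ‖(f - g) (zf f)‖ := le_abs_self _
        _ ≤ ‖f - g‖ * ‖zf f‖ := (f - g).le_opNorm _
        _ ≤ ‖f - g‖ * 1 := by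
            have := (f - g).le_opNorm (zf f)
            gcongr
            exact hzf1 f
        _ ≤ ‖g‖ / 8 := by rw [mul_one]; exact hdist.le
    have hbig : 7 * ‖g‖ / 16 ≤ f (zf f) := le_trans (by linarith) (hzf2 f)
    linarith
  have hsep : IsSeparable (W : Set Z) := by
    rw [hWdef, Submodule.topologicalClosure_coe]
    exact ((Dcount.image zf).isSeparable.span).closure
  rw [hWtop] at hsep
  have : IsSeparable (univ : Set Z) := by simpa using hsep
  exact isSeparable_univ_iff.1 this

/-- Reflexive: bounded sequences have weakly convergent subsequences. -/
lemma exists_weak_limit (hrefl : Function.Surjective (inclusionInDoubleDual ℝ Z))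
    (x : ℕ → Z) (b : ℝ) (hb : ∀ n, ‖x n‖ ≤ b) :
    ∃ φ : ℕ → ℕ, StrictMono φ ∧ ∃ L : Z,
      ∀ f : Z →L[ℝ] ℝ, Tendsto (fun n => f (x (φ n))) atTop (𝓝 (f L)) := by
  have hb0 : 0 ≤ b := le_trans (norm_nonneg _) (hb 0)
  set Y := (Submodule.span ℝ (Set.range x)).topologicalClosure with hYdef
  have hYclosed : IsClosed (Y : Set Z) := Submodule.isClosed_topologicalClosure _
  have hxY : ∀ n, x n ∈ Y :=
    fun n => Submodule.le_topologicalClosure _ (Submodule.subset_span (Set.mem_range_self n))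
  haveI : SeparableSpace Y := by
    have h1 : IsSeparable (Y : Set Z) := by
      rw [hYdef, Submodule.topologicalClosure_coe]
      exact ((Set.countable_range x).isSeparable.span).closure
    exact h1.separableSpace
  have hYrefl := reflexive_closed_subspace hrefl Y hYclosed
  haveI : SeparableSpace (StrongDual ℝ (StrongDual ℝ Y)) :=
    hYrefl.denseRange.separableSpace (inclusionInDoubleDual ℝ Y).continuous
  haveI : SeparableSpace (StrongDual ℝ Y) := separable_of_dual_separable (Z := StrongDual ℝ Y)
  obtain ⟨u, hu⟩ := exists_dense_seq (StrongDual ℝ Y)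
  have hext : ∀ m : ℕ, ∃ g : Z →L[ℝ] ℝ, ∀ y : Y, g y = u m y := by
    intro m
    obtain ⟨g, hg, -⟩ := exists_extension_norm_eq (𝕜 := ℝ) Y (u m)
    exact ⟨g, hg⟩
  choose g hg using hext
  -- diagonal extraction
  set T : ℕ → (ℕ → ℝ) := fun n m => g m (x n) with hT
  have hTmem : ∀ n, T n ∈ Set.pi Set.univ (fun m => Icc (-(‖g m‖ * b)) (‖g m‖ * b)) := by
    intro n m _
    have h1 : ‖g m (x n)‖ ≤ ‖g m‖ * b := by
      calc ‖g m (x n)‖ ≤ ‖g m‖ * ‖x n‖ := (g m).le_opNorm _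
        _ ≤ ‖g m‖ * b := by gcongr; exact hb n
    rw [Real.norm_eq_abs, abs_le] at h1
    exact ⟨h1.1, h1.2⟩
  have hcpt : IsCompact (Set.pi Set.univ fun m => Icc (-(‖g m‖ * b)) (‖g m‖ * b)) :=
    isCompact_univ_pi fun m => isCompact_Icc
  obtain ⟨a, -, φ, hφ, hconv⟩ := hcpt.tendsto_subseq hTmem
  have hcoord : ∀ m, Tendsto (fun n => g m (x (φ n))) atTop (𝓝 (a m)) := by
    intro m
    exact (tendsto_pi_nhds.1 hconv m)
  -- every functional converges along φ
  have key : ∀ f : Z →L[ℝ] ℝ, ∃ l, Tendsto (fun n => f (x (φ n))) atTop (𝓝 l) := by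
    intro f
    apply cauchySeq_tendsto_of_complete
    rw [Metric.cauchySeq_iff]
    intro ε hε
    set fY : StrongDual ℝ Y := f.comp Y.subtypeL with hfY
    have hden : 0 < ε / (3 * (b + 1)) := by positivity
    obtain ⟨m, hm⟩ := hu.exists_dist_lt fY hden
    have hptb : ∀ n, |f (x n) - g m (x n)| ≤ ε / 3 := by
      intro n
      have h1 : f (x n) - g m (x n) = (fY - u m) ⟨x n, hxY n⟩ := by
        simp [hfY, hg m ⟨x n, hxY n⟩]
      rw [h1]
      calc |(fY - u m) ⟨x n, hxY n⟩| ≤ ‖fY - u m‖ * ‖(⟨x n, hxY n⟩ : Y)‖ :=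
            (fY - u m).le_opNorm _
        _ ≤ (ε / (3 * (b + 1))) * b := by
            apply mul_le_mul _ _ (norm_nonneg _) hden.le
            · exact (dist_eq_norm fY (u m)).symm.le.trans hm.le
            · show ‖x n‖ ≤ b; exact hb n
        _ ≤ ε / 3 := by
            rw [div_mul_eq_mul_div, div_le_div_iff₀ (by positivity) (by norm_num)]
            nlinarith
    have hgc : CauchySeq (fun n => g m (x (φ n))) := (hcoord m).cauchySeq
    rw [Metric.cauchySeq_iff] at hgc
    obtain ⟨N, hN⟩ := hgc (ε / 4) (by positivity)
    refine ⟨N, fun n hn n' hn' => ?_⟩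
    have h1 := hptb (φ n)
    have h2 := hptb (φ n')
    have h3 := hN n hn n' hn'
    rw [Real.dist_eq] at h3 ⊢
    have hdec : f (x (φ n)) - f (x (φ n')) =
        (f (x (φ n)) - g m (x (φ n))) + (g m (x (φ n)) - g m (x (φ n')))
          + (g m (x (φ n')) - f (x (φ n'))) := by ring
    rw [hdec]
    calc |(f (x (φ n)) - g m (x (φ n))) + (g m (x (φ n)) - g m (x (φ n')))
          + (g m (x (φ n')) - f (x (φ n')))|
        ≤ |(f (x (φ n)) - g m (x (φ n))) + (g m (x (φ n)) - g m (x (φ n')))|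
          + |g m (x (φ n')) - f (x (φ n'))| := abs_add_le _ _
      _ ≤ |f (x (φ n)) - g m (x (φ n))| + |g m (x (φ n)) - g m (x (φ n'))|
          + |g m (x (φ n')) - f (x (φ n'))| := by gcongr; exact abs_add_le _ _
      _ < ε := by
          rw [abs_sub_comm (g m (x (φ n')))] at *
          linarith [h1, h2, h3]
  choose lim hlim using key
  have hadd : ∀ f f' : StrongDual ℝ Z, lim (f + f') = lim f + lim f' := by
    intro f f'
    exact tendsto_nhds_unique (hlim (f + f')) (by simpa using ((hlim f).add (hlim f')))
  have hsmul : ∀ (c : ℝ) (f : StrongDual ℝ Z), lim (c • f) = c * lim f := by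
    intro c f
    exact tendsto_nhds_unique (hlim (c • f)) (by simpa using ((hlim f).const_mul c))
  set Λlin : StrongDual ℝ Z →ₗ[ℝ] ℝ :=
    { toFun := lim, map_add' := hadd, map_smul' := fun c f => by simpa using hsmul c f }
    with hΛlin
  have hbound : ∀ f : StrongDual ℝ Z, ‖Λlin f‖ ≤ b * ‖f‖ := by
    intro f
    have hev : ∀ n, |f (x (φ n))| ≤ b * ‖f‖ := by
      intro n
      calc |f (x (φ n))| ≤ ‖f‖ * ‖x (φ n)‖ := f.le_opNorm _
        _ ≤ ‖f‖ * b := by gcongr; exact hb _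
        _ = b * ‖f‖ := mul_comm _ _
    have habs : Tendsto (fun n => |f (x (φ n))|) atTop (𝓝 |lim f|) := (hlim f).abs
    exact le_of_tendsto habs (Eventually.of_forall hev)
  obtain ⟨L, hL⟩ := hrefl (LinearMap.mkContinuous Λlin b hbound)
  refine ⟨φ, hφ, L, fun f => ?_⟩
  have hfL : f L = lim f := by
    have h5 := congrArg (fun T => T f) hL
    simpa [hΛlin] using h5
  rw [hfL]; exact hlim f


end BSAux

namespace BSAux

open NormedSpace TopologicalSpace

variable {W : Type*} [NormedAddCommGroup W] [NormedSpace ℝ W]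

/-- Unpacking asymptotic uniform smoothness. -/
lemma aus_step (haus : CLG.AsympUniformlySmooth W) {ε : ℝ} (hε : 0 < ε) :
    ∃ t : ℝ, 0 < t ∧ ∀ x : W, ‖x‖ = 1 →
      ∃ E : Submodule ℝ W, FiniteDimensional ℝ (W ⧸ E) ∧
        ∀ v ∈ E, ‖v‖ ≤ t → ‖x + v‖ ≤ 1 + ε * ‖v‖ := by
  have haus' : Tendsto (fun t => CLG.ausModulus W t / t) (𝓝[>] (0:ℝ)) (𝓝 0) := haus
  have hev : ∀ᶠ t in 𝓝[>] (0:ℝ), |CLG.ausModulus W t / t| < ε := by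
    have := Metric.tendsto_nhds.1 haus' ε hε
    filter_upwards [this] with t ht
    rwa [Real.dist_eq, sub_zero] at ht
  obtain ⟨t, htlt, htpos⟩ := (hev.and self_mem_nhdsWithin).exists
  have ht0 : 0 < t := htpos
  have hρ : CLG.ausModulus W t < ε * t := by
    have h1 : CLG.ausModulus W t / t < ε := (abs_lt.1 htlt).2
    calc CLG.ausModulus W t = (CLG.ausModulus W t / t) * t := by field_simp
      _ < ε * t := mul_lt_mul_of_pos_right h1 ht0
  refine ⟨t, ht0, ?_⟩
  intro x hx
  set F : {x : W // ‖x‖ = 1} → {E : Submodule ℝ W // FiniteDimensional ℝ (W ⧸ E)} → ℝ :=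
    fun x' E => ⨆ h : {h : W // h ∈ E.1 ∧ ‖h‖ = 1}, (‖x'.1 + t • h.1‖ - 1) with hF
  haveI hEne : Nonempty {E : Submodule ℝ W // FiniteDimensional ℝ (W ⧸ E)} := ⟨⊤, inferInstance⟩
  have hterm : ∀ (x' : {x : W // ‖x‖ = 1}) (E : {E : Submodule ℝ W // FiniteDimensional ℝ (W ⧸ E)})
      (h : {h : W // h ∈ E.1 ∧ ‖h‖ = 1}), ‖x'.1 + t • h.1‖ - 1 ≤ t := by
    intro x' E h
    have h1 : ‖x'.1 + t • h.1‖ ≤ ‖x'.1‖ + ‖t • h.1‖ := norm_add_le _ _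
    rw [norm_smul, Real.norm_eq_abs, abs_of_pos ht0, x'.2, h.2.2] at h1
    linarith
  have hbA : ∀ (x' : {x : W // ‖x‖ = 1}) (E : {E : Submodule ℝ W // FiniteDimensional ℝ (W ⧸ E)}),
      BddAbove (Set.range fun h : {h : W // h ∈ E.1 ∧ ‖h‖ = 1} => ‖x'.1 + t • h.1‖ - 1) :=
    fun x' E => ⟨t, by rintro r ⟨h, rfl⟩; exact hterm x' E h⟩
  have hFle : ∀ x' E, F x' E ≤ t := fun x' E => Real.iSup_le (hterm x' E) ht0.le
  have hFge : ∀ x' E, -t ≤ F x' E := by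
    intro x' E
    rcases isEmpty_or_nonempty {h : W // h ∈ E.1 ∧ ‖h‖ = 1} with hem | hne
    · rw [hF]
      simp only [Real.iSup_of_isEmpty]
      linarith
    · obtain ⟨h⟩ := hne
      refine le_trans ?_ (le_ciSup (hbA x' E) h)
      have h1 : ‖x'.1‖ ≤ ‖x'.1 + t • h.1‖ + ‖t • h.1‖ := by
        calc ‖x'.1‖ = ‖(x'.1 + t • h.1) - t • h.1‖ := by rw [add_sub_cancel_right]
          _ ≤ ‖x'.1 + t • h.1‖ + ‖t • h.1‖ := norm_sub_le _ _
      rw [norm_smul, Real.norm_eq_abs, abs_of_pos ht0, x'.2, h.2.2] at h1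
      linarith
  have hbB : ∀ x', BddBelow (Set.range (F x')) :=
    fun x' => ⟨-t, by rintro r ⟨E, rfl⟩; exact hFge x' E⟩
  have houter : BddAbove (Set.range fun x' : {x : W // ‖x‖ = 1} => ⨅ E, F x' E) := by
    refine ⟨t, ?_⟩
    rintro r ⟨x', rfl⟩
    exact le_trans (ciInf_le (hbB x') ⟨⊤, inferInstance⟩) (hFle x' _)
  have hle : (⨅ E, F ⟨x, hx⟩ E) ≤ CLG.ausModulus W t := by
    have hrw : CLG.ausModulus W t = ⨆ x' : {x : W // ‖x‖ = 1}, ⨅ E, F x' E := rfl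
    rw [hrw]
    exact le_ciSup houter ⟨x, hx⟩
  obtain ⟨E, hElt⟩ := exists_lt_of_ciInf_lt (lt_of_le_of_lt hle hρ)
  refine ⟨E.1, E.2, ?_⟩
  have hunit : ∀ h : W, h ∈ E.1 → ‖h‖ = 1 → ‖x + t • h‖ ≤ 1 + ε * t := by
    intro h hmem hnorm
    have h2 : ‖x + t • h‖ - 1 ≤ F ⟨x, hx⟩ E := le_ciSup (hbA ⟨x, hx⟩ E) ⟨h, hmem, hnorm⟩
    have h3 : ‖x + t • h‖ - 1 < ε * t := lt_of_le_of_lt h2 hElt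
    linarith
  intro v hv hvt
  rcases eq_or_ne v 0 with rfl | hv0
  · simp only [add_zero, hx, norm_zero, mul_zero]
    linarith
  · have hvpos : 0 < ‖v‖ := norm_pos_iff.2 hv0
    set h := ‖v‖⁻¹ • v with hh
    have hhE : h ∈ E.1 := E.1.smul_mem _ hv
    have hhnorm : ‖h‖ = 1 := norm_smul_inv_norm hv0
    have hkey := hunit h hhE hhnorm
    set a := ‖v‖ / t with ha
    have ha1 : a ≤ 1 := (div_le_one ht0).2 hvt
    have ha0 : 0 < a := div_pos hvpos ht0
    have hat : a * t = ‖v‖ := div_mul_cancel₀ _ ht0.ne'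
    have hco : x + v = (1 - a) • x + a • (x + t • h) := by
      have h4 : a • (t • h) = v := by
        rw [smul_smul, hat, hh, smul_smul, mul_inv_cancel₀ hvpos.ne', one_smul]
      rw [smul_add, h4, sub_smul, one_smul]
      abel
    calc ‖x + v‖ = ‖(1 - a) • x + a • (x + t • h)‖ := by rw [hco]
      _ ≤ (1 - a) * ‖x‖ + a * ‖x + t • h‖ := by
          refine (norm_add_le _ _).trans ?_
          rw [norm_smul, norm_smul, Real.norm_eq_abs, Real.norm_eq_abs,
            abs_of_nonneg (by linarith : (0:ℝ) ≤ 1 - a), abs_of_nonneg ha0.le]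
      _ ≤ (1 - a) * 1 + a * (1 + ε * t) := by
          gcongr
          · linarith
      _ = 1 + ε * (a * t) := by ring
      _ = 1 + ε * ‖v‖ := by rw [hat]

/-- In a finite dimensional space, weakly null sequences are norm null. -/
lemma findim_weak_null {V : Type*} [NormedAddCommGroup V] [NormedSpace ℝ V]
    [FiniteDimensional ℝ V] {v : ℕ → V}
    (h : ∀ f : V →L[ℝ] ℝ, Tendsto (fun n => f (v n)) atTop (𝓝 0)) :
    Tendsto v atTop (𝓝 0) := by
  set b := Module.finBasis ℝ V with hb
  have hmain : Tendsto (fun n => ∑ i, (b.repr (v n) i) • b i) atTop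
      (𝓝 (∑ i : Fin (Module.finrank ℝ V), (0:ℝ) • b i)) := by
    apply tendsto_finset_sum
    intro i _
    have hf : Tendsto (fun n => b.repr (v n) i) atTop (𝓝 0) := by
      have := h (LinearMap.toContinuousLinearMap (b.coord i))
      simpa using this
    exact hf.smul_const (b i)
  have heq : ∀ n, ∑ i, (b.repr (v n) i) • b i = v n := fun n => b.sum_repr (v n)
  rw [tendsto_congr heq] at hmain
  simpa using hmain

/-- Weakly null sequences approach submodules of finite codimension. -/
lemma tendsto_infDist_zero {z : ℕ → W} (hz : CLG.WeaklyNull z) (E : Submodule ℝ W)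
    (hE : FiniteDimensional ℝ (W ⧸ E)) :
    Tendsto (fun n => infDist (z n) (E : Set W)) atTop (𝓝 0) := by
  have hz' : ∀ φ : W →L[ℝ] ℝ, Tendsto (fun n => φ (z n)) atTop (𝓝 0) := hz
  set C := E.topologicalClosure with hC
  haveI : IsClosed (C : Set W) := Submodule.isClosed_topologicalClosure E
  have hle : E ≤ C := Submodule.le_topologicalClosure E
  haveI : FiniteDimensional ℝ (W ⧸ C) := by
    have hle' : E ≤ Submodule.comap LinearMap.id C := by simpa using hle
    have hsurj : Function.Surjective (Submodule.mapQ E C LinearMap.id hle') := by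
      intro w
      obtain ⟨a, rfl⟩ := Submodule.mkQ_surjective C w
      exact ⟨Submodule.Quotient.mk a, by simp [Submodule.mapQ_apply]⟩
    exact Module.Finite.of_surjective _ hsurj
  have hq : Tendsto (fun n => (Submodule.Quotient.mk (z n) : W ⧸ C)) atTop (𝓝 0) := by
    apply findim_weak_null
    intro f
    exact hz' (f.comp (mkCLM C))
  have hnorm : Tendsto (fun n => ‖(Submodule.Quotient.mk (z n) : W ⧸ C)‖) atTop (𝓝 0) :=
    tendsto_zero_iff_norm_tendsto_zero.1 hq
  have hkey : ∀ w : W, ‖(Submodule.Quotient.mk w : W ⧸ C)‖ = infDist w (C : Set W) :=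
    fun w => QuotientAddGroup.norm_mk w
  have hcl : ∀ w : W, infDist w (C : Set W) = infDist w (E : Set W) := by
    intro w
    rw [hC, Submodule.topologicalClosure_coe, infDist_closure]
  refine hnorm.congr fun n => ?_
  rw [hkey, hcl]

/-- Weakly null sequences in AUS spaces have subsequences with norm-null Cesàro means. -/
lemma cesaro_null_of_weakly_null (haus : CLG.AsympUniformlySmooth W)
    {z : ℕ → W} (hz : CLG.WeaklyNull z) {b : ℝ} (hb : ∀ n, ‖z n‖ ≤ b) :
    ∃ ψ : ℕ → ℕ, StrictMono ψ ∧
      Tendsto (fun k : ℕ => (k : ℝ)⁻¹ • ∑ j ∈ Finset.range k, z (ψ j)) atTop (𝓝 0) := by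
  have hb0 : 0 ≤ b := le_trans (norm_nonneg _) (hb 0)
  have hts : ∀ m : ℕ, ∃ t : ℝ, 0 < t ∧ ∀ x : W, ‖x‖ = 1 →
      ∃ E : Submodule ℝ W, FiniteDimensional ℝ (W ⧸ E) ∧
        ∀ v ∈ E, ‖v‖ ≤ t → ‖x + v‖ ≤ 1 + (1 / (m + 1)) * ‖v‖ :=
    fun m => aus_step haus (by positivity)
  choose t0 ht0pos ht0prop using hts
  set t : ℕ → ℝ := fun m => Nat.rec (t0 0) (fun m ih => min ih (t0 (m + 1))) m with htdef
  have ht_succ : ∀ m, t (m + 1) = min (t m) (t0 (m + 1)) := fun m => rfl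
  have htpos : ∀ m, 0 < t m := by
    intro m
    induction m with
    | zero => exact ht0pos 0
    | succ m ih => rw [ht_succ]; exact lt_min ih (ht0pos (m + 1))
  have htle : ∀ m, t m ≤ t0 m := by
    intro m
    cases m with
    | zero => exact le_rfl
    | succ m => rw [ht_succ]; exact min_le_right _ _
  have htanti : Antitone t :=
    antitone_nat_of_succ_le fun m => by rw [ht_succ]; exact min_le_left _ _
  have hprop : ∀ m : ℕ, ∀ x : W, ‖x‖ = 1 →
      ∃ E : Submodule ℝ W, FiniteDimensional ℝ (W ⧸ E) ∧
        ∀ v ∈ E, ‖v‖ ≤ t m → ‖x + v‖ ≤ 1 + (1 / (m + 1)) * ‖v‖ := by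
    intro m x hx
    obtain ⟨E, hE1, hE2⟩ := ht0prop m x hx
    exact ⟨E, hE1, fun v hv hvt => hE2 v hv (le_trans hvt (htle m))⟩
  -- the schedule
  set K : ℕ → ℕ := fun m => Nat.rec 0
    (fun m ih => max (ih + 1) ((m + 2) * (⌈(b + 1) / t (m + 1) + b + 1⌉₊ + 1))) m with hKdef
  have hK0 : K 0 = 0 := rfl
  have hK_succ : ∀ m, K (m + 1)
      = max (K m + 1) ((m + 2) * (⌈(b + 1) / t (m + 1) + b + 1⌉₊ + 1)) := fun m => rfl
  have hKmono : StrictMono K := strictMono_nat_of_lt_succ fun m => by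
    rw [hK_succ]; exact lt_of_lt_of_le (Nat.lt_succ_self _) (le_max_left _ _)
  set mf : ℕ → ℕ := fun k => Nat.findGreatest (fun m => K m ≤ k) k with hmfdef
  have hmf_spec : ∀ k, K (mf k) ≤ k := by
    intro k
    have h0 : K 0 ≤ k := by rw [hK0]; exact Nat.zero_le k
    exact Nat.findGreatest_spec (P := fun m => K m ≤ k) (Nat.zero_le k) h0
  have hmf_ge : ∀ M k, K M ≤ k → M ≤ mf k :=
    fun M k hMk => Nat.le_findGreatest (le_trans hKmono.le_apply hMk) hMk
  have hmf_mono : Monotone mf :=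
    fun k k' hkk' => hmf_ge _ _ (le_trans (hmf_spec k) hkk')
  have hmf_tendsto : Tendsto mf atTop atTop :=
    tendsto_atTop_atTop.2 fun M => ⟨K M, fun k hk => hmf_ge M k hk⟩
  -- quantities
  set τ : ℕ → ℝ := fun k => (b + 1) / t (mf k) with hτdef
  set u : ℕ → ℝ := fun k => τ k + b + 1 with hudef
  set c : ℕ → ℝ := fun k => (b + 1) / (mf k + 1) + 1 / (k + 1) with hcdef
  have hτpos : ∀ k, 0 < τ k := fun k => div_pos (by linarith) (htpos _)
  have hcpos : ∀ k, 0 ≤ c k := fun k => by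
    simp only [hcdef]
    positivity
  have humono : Monotone u := by
    intro k k' hkk'
    have h0 : t (mf k') ≤ t (mf k) := htanti (hmf_mono hkk')
    have h1 : τ k ≤ τ k' := by
      simp only [hτdef]
      have ht' := htpos (mf k')
      gcongr
    simp only [hudef]
    linarith
  -- step existence
  have hstep : ∀ (k i : ℕ) (S : W), ∃ j, i < j ∧ ‖S + z j‖ ≤ max (u k) (‖S‖ + c k) := by
    intro k i S
    by_cases hS : ‖S‖ < τ k
    · refine ⟨i + 1, Nat.lt_succ_self i, le_trans ?_ (le_max_left _ _)⟩
      calc ‖S + z (i + 1)‖ ≤ ‖S‖ + ‖z (i + 1)‖ := norm_add_le _ _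
        _ ≤ u k := by
            have := hb (i + 1)
            simp only [hudef]
            linarith
    · push_neg at hS
      have hSpos : 0 < ‖S‖ := lt_of_lt_of_le (hτpos k) hS
      have hSne : S ≠ 0 := fun h0 => by rw [h0, norm_zero] at hSpos; exact lt_irrefl 0 hSpos
      obtain ⟨E, hEfd, hE⟩ := hprop (mf k) (‖S‖⁻¹ • S) (norm_smul_inv_norm hSne)
      have hdist := tendsto_infDist_zero hz E hEfd
      have hδ : (0:ℝ) < 1 / (k + 1) := by positivity
      obtain ⟨j, hjev, hji⟩ := ((hdist.eventually_lt_const hδ).and (eventually_gt_atTop i)).exists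
      obtain ⟨h, hhE, hhd⟩ := (infDist_lt_iff ⟨0, E.zero_mem⟩).1 hjev
      have hzh : ‖z j - h‖ < 1 / (k + 1) := by rwa [dist_eq_norm] at hhd
      have hone : 1 / ((k:ℝ) + 1) ≤ 1 := by
        rw [div_le_one (by positivity)]
        linarith [Nat.cast_nonneg (α := ℝ) k]
      have hhb : ‖h‖ ≤ b + 1 := by
        calc ‖h‖ = ‖z j - (z j - h)‖ := by congr 1; abel
          _ ≤ ‖z j‖ + ‖z j - h‖ := norm_sub_le _ _
          _ ≤ b + 1 := by have := hb j; linarith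
      set v : W := ‖S‖⁻¹ • h with hvdef
      have hvE : v ∈ E := E.smul_mem _ hhE
      have hvnorm : ‖v‖ = ‖S‖⁻¹ * ‖h‖ := by
        rw [hvdef, norm_smul, Real.norm_eq_abs, abs_of_pos (inv_pos.2 hSpos)]
      have h5 : b + 1 ≤ ‖S‖ * t (mf k) := (div_le_iff₀ (htpos (mf k))).1 hS
      have hvle : ‖v‖ ≤ t (mf k) := by
        rw [hvnorm]
        calc ‖S‖⁻¹ * ‖h‖ ≤ ‖S‖⁻¹ * (‖S‖ * t (mf k)) := by
              gcongr
              exact hhb.trans h5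
          _ = t (mf k) := by field_simp
      have hkey := hE v hvE hvle
      have hSh : S + h = ‖S‖ • (‖S‖⁻¹ • S + v) := by
        rw [smul_add, hvdef, smul_smul, smul_smul, mul_inv_cancel₀ hSpos.ne', one_smul, one_smul]
      have hnSh : ‖S + h‖ ≤ ‖S‖ * (1 + (1 / ((mf k : ℝ) + 1)) * ‖v‖) := by
        rw [hSh, norm_smul, Real.norm_eq_abs, abs_of_pos hSpos]
        exact mul_le_mul_of_nonneg_left hkey hSpos.le
      have hSv : ‖S‖ * ‖v‖ = ‖h‖ := by
        rw [hvnorm]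
        field_simp
      have hfrac : (1 / ((mf k : ℝ) + 1)) * ‖h‖ ≤ (b + 1) / ((mf k : ℝ) + 1) := by
        rw [div_mul_eq_mul_div, one_mul]
        gcongr
      refine ⟨j, hji, le_trans ?_ (le_max_right _ _)⟩
      calc ‖S + z j‖ = ‖(S + h) + (z j - h)‖ := by congr 1; abel
        _ ≤ ‖S + h‖ + ‖z j - h‖ := norm_add_le _ _
        _ ≤ ‖S‖ * (1 + (1 / ((mf k : ℝ) + 1)) * ‖v‖) + 1 / (k + 1) := by
            have := hzh.le
            linarith
        _ = ‖S‖ + (1 / ((mf k : ℝ) + 1)) * (‖S‖ * ‖v‖) + 1 / (k + 1) := by ring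
        _ = ‖S‖ + (1 / ((mf k : ℝ) + 1)) * ‖h‖ + 1 / (k + 1) := by rw [hSv]
        _ ≤ ‖S‖ + c k := by
            simp only [hcdef]
            push_cast
            linarith
  -- build the sequence
  choose nxt hnxt1 hnxt2 using hstep
  set st : ℕ → ℕ × W := fun k => Nat.rec ((0 : ℕ), (0 : W))
    (fun k ih => (nxt k ih.1 ih.2, ih.2 + z (nxt k ih.1 ih.2))) k with hstdef
  set ψ : ℕ → ℕ := fun k => (st (k + 1)).1 with hψdef
  have hst1 : ∀ k, (st (k + 1)).1 = nxt k (st k).1 (st k).2 := fun k => rfl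
  have hst2 : ∀ k, (st (k + 1)).2 = (st k).2 + z (ψ k) := fun k => rfl
  have hψmono : StrictMono ψ := strictMono_nat_of_lt_succ fun k =>
    hnxt1 (k + 1) (st (k + 1)).1 (st (k + 1)).2
  have hsum : ∀ k, (st k).2 = ∑ j ∈ Finset.range k, z (ψ j) := by
    intro k
    induction k with
    | zero => simp [hstdef]
    | succ k ih => rw [hst2, ih, Finset.sum_range_succ]
  set a : ℕ → ℝ := fun k => ‖(st k).2‖ with hadef
  have ha0 : ∀ k, 0 ≤ a k := fun k => by simp only [hadef]; exact norm_nonneg _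
  have hu0 : ∀ k, 0 ≤ u k := fun k => by
    have := hτpos k
    simp only [hudef]
    linarith
  have ha_succ : ∀ k, a (k + 1) ≤ max (u k) (a k + c k) := fun k =>
    hnxt2 k (st k).1 (st k).2
  have hbd : ∀ k, a (k + 1) ≤ u k + ∑ j ∈ Finset.range (k + 1), c j := by
    intro k
    induction k with
    | zero =>
      refine le_trans (ha_succ 0) ?_
      have haz : a 0 = 0 := by simp [hadef, hstdef]
      have hsum1 : ∑ j ∈ Finset.range (0 + 1), c j = c 0 := by simp
      rw [max_le_iff, haz, hsum1]
      exact ⟨by linarith [hcpos 0], by linarith [hu0 0]⟩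
    | succ k ih =>
      refine le_trans (ha_succ (k + 1)) ?_
      rw [max_le_iff]
      constructor
      · have h1 : (0:ℝ) ≤ ∑ j ∈ Finset.range (k + 2), c j :=
          Finset.sum_nonneg fun j _ => hcpos j
        linarith
      · rw [Finset.sum_range_succ]
        have h2 := humono (Nat.le_succ k)
        linarith
  have hubd : ∀ k, K 1 ≤ k → u k ≤ (k : ℝ) / ((mf k : ℝ) + 1) := by
    intro k hk
    have hm1 : 1 ≤ mf k := hmf_ge 1 k hk
    obtain ⟨m', hm'⟩ : ∃ m', mf k = m' + 1 := ⟨mf k - 1, by omega⟩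
    have hKm : (mf k + 1) * (⌈(b + 1) / t (mf k) + b + 1⌉₊ + 1) ≤ K (mf k) := by
      rw [hm', hK_succ]
      exact le_max_right _ _
    have hKk : (K (mf k) : ℝ) ≤ (k : ℝ) := by exact_mod_cast hmf_spec k
    have hceil : u k ≤ (⌈(b + 1) / t (mf k) + b + 1⌉₊ : ℝ) + 1 := by
      have h3 := Nat.le_ceil ((b + 1) / t (mf k) + b + 1)
      simp only [hudef, hτdef]
      linarith
    have hmul : ((mf k : ℝ) + 1) * u k ≤ (k : ℝ) := by
      calc ((mf k : ℝ) + 1) * u k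
          ≤ ((mf k : ℝ) + 1) * ((⌈(b + 1) / t (mf k) + b + 1⌉₊ : ℝ) + 1) := by
            gcongr
        _ = (((mf k + 1) * (⌈(b + 1) / t (mf k) + b + 1⌉₊ + 1) : ℕ) : ℝ) := by
            push_cast
            ring
        _ ≤ (K (mf k) : ℝ) := by exact_mod_cast hKm
        _ ≤ (k : ℝ) := hKk
    rw [le_div_iff₀ (by positivity)]
    nlinarith [hmul]
  -- conclusion
  refine ⟨ψ, hψmono, ?_⟩
  rw [tendsto_zero_iff_norm_tendsto_zero]
  have hnormeq : ∀ k : ℕ, ‖(k : ℝ)⁻¹ • ∑ j ∈ Finset.range k, z (ψ j)‖ = (k : ℝ)⁻¹ * a k := by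
    intro k
    have h1 : ‖∑ j ∈ Finset.range k, z (ψ j)‖ = a k := by
      simp only [hadef]
      rw [hsum]
    rw [norm_smul, Real.norm_eq_abs, abs_of_nonneg (by positivity : (0:ℝ) ≤ (k : ℝ)⁻¹), h1]
  rw [tendsto_congr hnormeq, ← tendsto_add_atTop_iff_nat 1]
  have hmf1 : Tendsto (fun k => 1 / ((mf k : ℝ) + 1)) atTop (𝓝 0) :=
    tendsto_one_div_add_atTop_nhds_zero_nat.comp hmf_tendsto
  have hcz : Tendsto c atTop (𝓝 0) := by
    have h1 : Tendsto (fun k => (b + 1) * (1 / ((mf k : ℝ) + 1))) atTop (𝓝 ((b + 1) * 0)) :=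
      hmf1.const_mul (b + 1)
    have h2 := tendsto_one_div_add_atTop_nhds_zero_nat (𝕜 := ℝ)
    have h3 := h1.add h2
    simp only [mul_zero, add_zero] at h3
    refine h3.congr fun k => ?_
    simp only [hcdef]
    ring
  have hcesaro : Tendsto (fun n : ℕ => (n : ℝ)⁻¹ • ∑ j ∈ Finset.range n, c j) atTop (𝓝 0) :=
    hcz.cesaro_smul
  have hces' : Tendsto (fun k : ℕ => ((k + 1 : ℕ) : ℝ)⁻¹ * ∑ j ∈ Finset.range (k + 1), c j)
      atTop (𝓝 0) := by
    have h4 := hcesaro.comp (tendsto_add_atTop_nat 1)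
    refine h4.congr fun k => ?_
    simp only [Function.comp_apply, smul_eq_mul]
  apply squeeze_zero' (g := fun k =>
    1 / ((mf k : ℝ) + 1) + ((k + 1 : ℕ) : ℝ)⁻¹ * ∑ j ∈ Finset.range (k + 1), c j)
  · exact Eventually.of_forall fun k => mul_nonneg (by positivity) (ha0 (k + 1))
  · refine eventually_atTop.2 ⟨K 1, fun k hk => ?_⟩
    have h4 := hbd k
    have h5 := hubd k hk
    have hsumc : (0:ℝ) ≤ ∑ j ∈ Finset.range (k + 1), c j :=
      Finset.sum_nonneg fun j _ => hcpos j
    have h6 : ((k + 1 : ℕ) : ℝ)⁻¹ * a (k + 1)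
        ≤ ((k + 1 : ℕ) : ℝ)⁻¹ * u k + ((k + 1 : ℕ) : ℝ)⁻¹ * ∑ j ∈ Finset.range (k + 1), c j := by
      rw [← mul_add]
      gcongr
    have h7 : ((k + 1 : ℕ) : ℝ)⁻¹ * u k ≤ 1 / ((mf k : ℝ) + 1) := by
      have h9 : (k : ℝ) ≤ ((k + 1 : ℕ) : ℝ) := by push_cast; linarith
      have h10 : u k ≤ ((k + 1 : ℕ) : ℝ) / ((mf k : ℝ) + 1) := by
        refine h5.trans ?_
        gcongr
      calc ((k + 1 : ℕ) : ℝ)⁻¹ * u k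
          ≤ ((k + 1 : ℕ) : ℝ)⁻¹ * (((k + 1 : ℕ) : ℝ) / ((mf k : ℝ) + 1)) := by
            gcongr
        _ = 1 / ((mf k : ℝ) + 1) := by
            rw [mul_div_assoc']
            rw [inv_mul_cancel₀ (by positivity : ((k + 1 : ℕ) : ℝ) ≠ 0)]
      -- end h7
    linarith
  · simpa using hmf1.add hces'

end BSAux



/-- Every reflexive asymptotically uniformly smooth Banach space has the Banach-Saks
property. -/
theorem banachSaks_of_reflexive_aus
    {X : Type*} [NormedAddCommGroup X] [NormedSpace ℝ X] [CompleteSpace X]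
    (hrefl : CLG.BanachReflexive X) (haus : CLG.AsympUniformlySmooth X) :
    CLG.BanachSaksProp X := by
  intro x hx
  obtain ⟨b, hb⟩ := hx
  have hrefl' : Function.Surjective (NormedSpace.inclusionInDoubleDual ℝ X) := hrefl
  obtain ⟨φ, hφ, L, hL⟩ := BSAux.exists_weak_limit hrefl' x b hb
  set z : ℕ → X := fun n => x (φ n) - L with hzdef
  have hz : CLG.WeaklyNull z := by
    intro f
    have h1 := (hL f).sub_const (f L)
    simp only [sub_self] at h1
    refine h1.congr fun n => ?_
    simp [hzdef]
  have hzb : ∀ n, ‖z n‖ ≤ b + ‖L‖ := fun n => by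
    simp only [hzdef]
    exact (norm_sub_le _ _).trans (add_le_add (hb _) le_rfl)
  obtain ⟨ψ, hψ, hces⟩ := BSAux.cesaro_null_of_weakly_null haus hz hzb
  refine ⟨φ ∘ ψ, hφ.comp hψ, L, ?_⟩
  have hdecomp : ∀ k : ℕ,
      (k : ℝ)⁻¹ • ∑ j ∈ Finset.range k, x (φ (ψ j))
        = ((k : ℝ)⁻¹ • ∑ j ∈ Finset.range k, z (ψ j)) + ((k : ℝ)⁻¹ * (k : ℝ)) • L := by
    intro k
    have h1 : ∑ j ∈ Finset.range k, x (φ (ψ j))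
        = (∑ j ∈ Finset.range k, z (ψ j)) + (k : ℝ) • L := by
      have h2 : ∀ j, x (φ (ψ j)) = z (ψ j) + L := fun j => by simp [hzdef]
      rw [Finset.sum_congr rfl fun j _ => h2 j, Finset.sum_add_distrib, Finset.sum_const,
        Finset.card_range, ← Nat.cast_smul_eq_nsmul ℝ]
    rw [h1, smul_add, smul_smul]
  have h2 : Tendsto (fun k : ℕ => ((k : ℝ)⁻¹ * (k : ℝ)) • L) atTop (𝓝 L) := by
    have hev : ∀ᶠ k : ℕ in atTop, L = ((k : ℝ)⁻¹ * (k : ℝ)) • L := by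
      filter_upwards [eventually_ge_atTop 1] with k hk
      have hk0 : (k : ℝ) ≠ 0 := by
        have : (1 : ℕ) ≤ k := hk
        have hk1 : 0 < k := this
        exact_mod_cast hk1.ne'
      rw [inv_mul_cancel₀ hk0, one_smul]
    exact tendsto_const_nhds.congr' hev
  have hfinal : Tendsto (fun k : ℕ =>
      ((k : ℝ)⁻¹ • ∑ j ∈ Finset.range k, z (ψ j)) + ((k : ℝ)⁻¹ * (k : ℝ)) • L)
      atTop (𝓝 L) := by
    simpa using hces.add h2
  refine hfinal.congr fun k => ?_
  rw [← hdecomp k]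
  simp [Function.comp]
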